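/- Let 0 ≤ Δ and x ≥ 2. Then (1/log⁴ x) ∫_1^{x³} (log y) log²(xy) y^{−1−2Δ/log x} dy ≤ ((2Δ² + 4Δ + 3)e^{6Δ} − 192Δ³ − 80Δ² − 22Δ − 3)/(8Δ⁴ e^{6Δ}) for Δ > 0. -/

import Mathlib

open Real

theorem stmt_12 (Δ x : ℝ) (hΔ : 0 < Δ) (hx : 2 ≤ x) :
    (1 / (Real.log x) ^ 4) *
        ∫ y in (1 : ℝ)..(x ^ 3),
          Real.log y * (Real.log (x * y)) ^ 2 * y ^ (-1 - 2 * Δ / Real.log x)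
      ≤ ((2 * Δ ^ 2 + 4 * Δ + 3) * Real.exp (6 * Δ)
            - 192 * Δ ^ 3 - 80 * Δ ^ 2 - 22 * Δ - 3)
          / (8 * Δ ^ 4 * Real.exp (6 * Δ)) := by
  have hx0 : (0:ℝ) < x := by linarith
  have hL : 0 < Real.log x := Real.log_pos (by linarith)
  set L : ℝ := Real.log x with hLdef
  have hc : 0 < 2 * Δ / L := by positivity
  set c : ℝ := 2 * Δ / L with hcdef
  have hcne : c ≠ 0 := ne_of_gt hc
  have hLne : L ≠ 0 := ne_of_gt hL
  set A : ℝ := 1 / c with hA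
  set B : ℝ := 2 * L / c + 3 / c ^ 2 with hB
  set C : ℝ := L ^ 2 / c + 4 * L / c ^ 2 + 6 / c ^ 3 with hC
  set D0 : ℝ := L ^ 2 / c ^ 2 + 4 * L / c ^ 3 + 6 / c ^ 4 with hD0
  set F : ℝ → ℝ := fun y => -(y ^ (-c) *
      (A * (Real.log y) ^ 3 + B * (Real.log y) ^ 2 + C * Real.log y + D0)) with hF
  have hx3 : (1:ℝ) ≤ x ^ 3 := one_le_pow₀ (by linarith)
  -- derivative of the cubic
  have hQ : ∀ s : ℝ, HasDerivAt (fun t => A * t ^ 3 + B * t ^ 2 + C * t + D0)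
      (3 * A * s ^ 2 + 2 * B * s + C) s := by
    intro s
    have h := (((hasDerivAt_pow 3 s).const_mul A).add
      ((hasDerivAt_pow 2 s).const_mul B)).add
      (((hasDerivAt_id s).const_mul C).add (hasDerivAt_const s D0))
    rw [show (3 * A * s ^ 2 + 2 * B * s + C) = A * (((3:ℕ):ℝ) * s ^ (3 - 1)) + B * (((2:ℕ):ℝ) * s ^ (2 - 1)) + (C * 1 + 0) from ?_,
      show (fun t => A * t ^ 3 + B * t ^ 2 + C * t + D0) = ((fun y => A * y ^ 3) + fun y => B * y ^ 2) + ((fun y => C * id y) + fun x => D0) from ?_]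
    · exact h
    · funext t; simp only [id_eq, Pi.add_apply]; ring
    · push_cast; ring
  -- derivative of F
  have hderiv : ∀ y ∈ Set.uIcc (1:ℝ) (x ^ 3), HasDerivAt F
      (Real.log y * (Real.log (x * y)) ^ 2 * y ^ (-1 - 2 * Δ / Real.log x)) y := by
    intro y hy
    rw [Set.uIcc_of_le hx3] at hy
    have hy1 : (1:ℝ) ≤ y := hy.1
    have hy0 : (0:ℝ) < y := by linarith
    have h1 : HasDerivAt (fun y : ℝ => y ^ (-c)) (-c * y ^ (-c - 1)) y :=
      Real.hasDerivAt_rpow_const (Or.inl hy0.ne')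
    have h2 : HasDerivAt Real.log y⁻¹ y := Real.hasDerivAt_log hy0.ne'
    have h3 := (hQ (Real.log y)).comp y h2
    have h4 := (h1.mul h3).neg
    have hxy : Real.log (x * y) = L + Real.log y := Real.log_mul hx0.ne' hy0.ne'
    have hyy : y ^ (-c) * y⁻¹ = y ^ (-c - 1) := by
      rw [show -c - 1 = -c + -1 by ring, ← Real.rpow_neg_one y, ← Real.rpow_add hy0]
    have hexp : (-1 - 2 * Δ / Real.log x) = -c - 1 := by rw [hcdef, ← hLdef]; ring
    have hpoly : c * (A * (Real.log y) ^ 3 + B * (Real.log y) ^ 2 + C * Real.log y + D0)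
        - (3 * A * (Real.log y) ^ 2 + 2 * B * Real.log y + C)
        = Real.log y * (L + Real.log y) ^ 2 := by
      rw [hA, hB, hC, hD0]; field_simp; ring
    have key : -(-c * y ^ (-c - 1) *
          (A * (Real.log y) ^ 3 + B * (Real.log y) ^ 2 + C * Real.log y + D0)
        + y ^ (-c) * ((3 * A * (Real.log y) ^ 2 + 2 * B * Real.log y + C) * y⁻¹))
        = Real.log y * (Real.log (x * y)) ^ 2 * y ^ (-1 - 2 * Δ / Real.log x) := by
      rw [hxy, hexp]
      linear_combination (y ^ (-c - 1)) * hpoly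
        - (3 * A * (Real.log y) ^ 2 + 2 * B * Real.log y + C) * hyy
    exact key ▸ h4
  -- integrability
  have hint : IntervalIntegrable
      (fun y => Real.log y * (Real.log (x * y)) ^ 2 * y ^ (-1 - 2 * Δ / Real.log x))
      MeasureTheory.volume 1 (x ^ 3) := by
    apply ContinuousOn.intervalIntegrable
    intro y hy
    rw [Set.uIcc_of_le hx3] at hy
    have hy0 : (0:ℝ) < y := by linarith [hy.1]
    apply ContinuousAt.continuousWithinAt
    have hlog : ContinuousAt Real.log y := Real.continuousAt_log hy0.ne'
    have hmul : ContinuousAt (fun y : ℝ => x * y) y := continuousAt_const.mul continuousAt_id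
    have hlogxy : ContinuousAt (fun y : ℝ => Real.log (x * y)) y :=
      (Real.continuousAt_log (by positivity)).comp hmul
    have hrpow : ContinuousAt (fun y : ℝ => y ^ (-1 - 2 * Δ / Real.log x)) y :=
      Real.continuousAt_rpow_const y _ (Or.inl hy0.ne')
    exact (hlog.mul (hlogxy.pow 2)).mul hrpow
  have hFTC := intervalIntegral.integral_eq_sub_of_hasDerivAt hderiv hint
  rw [hFTC]
  -- evaluate F at endpoints
  have hlogx3 : Real.log (x ^ 3) = 3 * L := by
    rw [Real.log_pow]; push_cast; rw [hLdef]
  have hx3pos : (0:ℝ) < x ^ 3 := by positivity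
  have hrpow3 : (x ^ 3 : ℝ) ^ (-c) = Real.exp (-(6 * Δ)) := by
    rw [Real.rpow_def_of_pos hx3pos, hlogx3, hcdef]
    congr 1
    field_simp
    ring
  have hF1 : F 1 = -D0 := by
    simp [hF, Real.log_one, Real.one_rpow]
  have hFx3 : F (x ^ 3) = -(Real.exp (-(6 * Δ)) *
      (A * (3 * L) ^ 3 + B * (3 * L) ^ 2 + C * (3 * L) + D0)) := by
    simp only [hF, hlogx3, hrpow3]
  rw [hF1, hFx3]
  have hE : Real.exp (-(6 * Δ)) = (Real.exp (6 * Δ))⁻¹ := Real.exp_neg _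
  have hEpos : (0:ℝ) < Real.exp (6 * Δ) := Real.exp_pos _
  rw [hE, hA, hB, hC, hD0, hcdef]
  have hΔne : Δ ≠ 0 := ne_of_gt hΔ
  apply le_of_eq
  field_simp
  ring
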